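/- For a (k+2,k,z) system using Staircase codes (n = k+2, up to two stragglers), the cumulative distribution function of the Master's waiting time satisfies, for all t > 0: F_{T_SC}(t) = F(t_{k+2})^{k+2} + (k+2)·(1 − F(t_{k+2}))·[ F(t_{k+1})^{k+1} + (k+1)·F(t_k)^k·( (1 − F(t_{k+1})) − (1/2)(1 − F(t_{k+2})) ) ], where F(s) = 1 − exp(−λ(k−z)s) for s ≥ 0 (and F(s)=0 for s<0), and t_i = max{ ((i−z)/(k−z))·(t − c/(i−z)), 0 } for i = k, k+1, k+2. -/

import Mathlib

open MeasureTheory ProbabilityTheory Real Finset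

/-- The `d`-th order statistic (the `d`-th smallest value, `1`-indexed) of the
values `f 0, …, f (n-1)`. -/
noncomputable def orderStat {n : ℕ} (f : Fin n → ℝ) (d : ℕ) : ℝ :=
  ((List.ofFn f).insertionSort (· ≤ ·)).getD (d - 1) 0

/-- The `m`-th harmonic number `H_m = ∑_{i=1}^m 1/i` (with `H_0 = 0`), as a real number. -/
noncomputable def harmonic' (m : ℕ) : ℝ := ∑ i ∈ Finset.range m, (1 : ℝ) / (i + 1)

/-- The Master's waiting time under Staircase codes:
`T_SC = min_{d ∈ {k,…,n}} ((k-z)/(d-z)) ⬝ T_(d)`, where the service times are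
`T i = c/(k-z) + T' i`. -/
noncomputable def TSC (n k z : ℕ) (hkn : k ≤ n) (c : ℝ) (T' : Fin n → ℝ) : ℝ :=
  (Finset.Icc k n).inf' (Finset.nonempty_Icc.mpr hkn) fun d =>
    ((k : ℝ) - z) / ((d : ℝ) - z) *
      orderStat (fun i => c / ((k : ℝ) - z) + T' i) d

/-- The CDF `F(s) = 1 - exp(-θ s)` for `s ≥ 0`, and `F(s) = 0` for `s < 0`. -/
noncomputable def Fcdf (θ s : ℝ) : ℝ := if 0 ≤ s then 1 - Real.exp (-θ * s) else 0

/-- The threshold `t_i = max( ((i-z)/(k-z))(t - c/(i-z)), 0 )`, with `i` given as a real. -/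
noncomputable def tThr (k z : ℕ) (c t i : ℝ) : ℝ :=
  max (((i - z) / ((k : ℝ) - z)) * (t - c / (i - z))) 0

lemma sorted_get_le_iff {l : List ℝ} (hl : l.Pairwise (· ≤ ·)) :
    ∀ {m : ℕ} (hm : m < l.length) (s : ℝ),
    (l.get ⟨m, hm⟩ ≤ s ↔ m < l.countP (fun x => decide (x ≤ s))) := by
  induction l with
  | nil => intro m hm; simp at hm
  | cons a l ih =>
    rw [List.pairwise_cons] at hl
    obtain ⟨ha, hl'⟩ := hl
    intro m hm s
    rw [List.countP_cons]
    cases m with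
    | zero =>
      simp only [List.get]
      constructor
      · intro h
        simp [h]
      · intro h
        by_contra hc
        push_neg at hc
        have h1 : (decide (a ≤ s) : Bool) = false := by simp [not_le.mpr hc]
        rw [h1] at h
        simp only [Bool.false_eq_true, if_false, add_zero] at h
        obtain ⟨x, hx, hxs⟩ := List.countP_pos_iff.mp (by exact h)
        have := ha x hx
        simp at hxs
        linarith
    | succ m =>
      simp only [List.get]
      rw [ih hl' (by simpa using hm) s]
      by_cases has : a ≤ s
      · simp [has]
      · have h1 : (decide (a ≤ s) : Bool) = false := by simp [has]
        rw [h1]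
        simp only [Bool.false_eq_true, if_false, add_zero]
        have hz : l.countP (fun x => decide (x ≤ s)) = 0 := by
          rw [List.countP_eq_zero]
          intro x hx
          simp only [decide_eq_true_eq]
          exact fun hxs => has (le_trans (ha x hx) hxs)
        omega

lemma orderStat_le_iff {n : ℕ} (f : Fin n → ℝ) (d : ℕ) (hd1 : 1 ≤ d) (hdn : d ≤ n) (s : ℝ) :
    (orderStat f d ≤ s ↔ d ≤ (Finset.univ.filter (fun i => f i ≤ s)).card) := by
  have hlen : ((List.ofFn f).insertionSort (· ≤ ·)).length = n := by
    rw [List.length_insertionSort, List.length_ofFn]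
  have hm : d - 1 < ((List.ofFn f).insertionSort (· ≤ ·)).length := by omega
  have hcount : ((List.ofFn f).insertionSort (· ≤ ·)).countP (fun x => decide (x ≤ s))
      = (Finset.univ.filter (fun i => f i ≤ s)).card := by
    rw [(List.perm_insertionSort _ _).countP_eq]
    rw [List.ofFn_eq_map, List.countP_map]
    have huniv : (Finset.univ : Finset (Fin n)) = ⟨(List.finRange n : Multiset (Fin n)), List.nodup_finRange n⟩ := rfl
    rw [huniv, Finset.card, Finset.filter_val, Multiset.filter_coe, Multiset.coe_card,
      ← List.countP_eq_length_filter]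
    rfl
  unfold orderStat
  rw [List.getD_eq_getElem _ _ hm]
  have := sorted_get_le_iff (List.pairwise_insertionSort (· ≤ ·) (List.ofFn f)) hm s
  rw [List.get_eq_getElem] at this
  rw [this, hcount]
  omega

lemma prod_ite_one' {ι M : Type*} [Fintype ι] [DecidableEq ι] [CommMonoid M] (j : ι) (x y : M) :
    (∏ i, (if i = j then x else y)) = x * y ^ (Fintype.card ι - 1) := by
  rw [← Finset.mul_prod_erase univ _ (mem_univ j), if_pos rfl]
  congr 1
  rw [Finset.prod_congr rfl (fun i hi => if_neg (Finset.ne_of_mem_erase hi)),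
    Finset.prod_const, Finset.card_erase_of_mem (mem_univ j), Finset.card_univ]

lemma prod_ite_two' {ι M : Type*} [Fintype ι] [DecidableEq ι] [CommMonoid M] (j i : ι)
    (hij : i ≠ j) (x y z : M) :
    (∏ m, (if m = j then x else if m = i then y else z))
      = x * (y * z ^ (Fintype.card ι - 2)) := by
  rw [← Finset.mul_prod_erase univ _ (mem_univ j), if_pos rfl]
  congr 1
  have hi : i ∈ univ.erase j := Finset.mem_erase.mpr ⟨hij, mem_univ i⟩
  rw [← Finset.mul_prod_erase _ _ hi, if_neg hij, if_pos rfl]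
  congr 1
  have hstep : ∀ m ∈ (univ.erase j).erase i,
      (if m = j then x else if m = i then y else z) = z := by
    intro m hm
    rw [if_neg (Finset.ne_of_mem_erase (Finset.mem_of_mem_erase hm)),
      if_neg (Finset.ne_of_mem_erase hm)]
  rw [Finset.prod_congr rfl hstep, Finset.prod_const,
    Finset.card_erase_of_mem hi, Finset.card_erase_of_mem (mem_univ j), Finset.card_univ, Nat.sub_sub]

lemma prod_ite_mem' {ι M : Type*} [Fintype ι] [DecidableEq ι] [CommMonoid M]
    (s : Finset ι) (x y : M) :
    (∏ i, (if i ∈ s then x else y)) = x ^ s.card * y ^ (Fintype.card ι - s.card) := by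
  rw [← Finset.prod_mul_prod_compl s]
  congr 1
  · rw [Finset.prod_congr rfl (fun i hi => if_pos hi), Finset.prod_const]
  · rw [Finset.prod_congr rfl (fun i hi => if_neg (Finset.mem_compl.mp hi)),
      Finset.prod_const, Finset.card_compl]

def cylEvent {Ω : Type*} {n : ℕ} (T' : Fin n → Ω → ℝ) (B : Fin n → Set ℝ) : Set Ω :=
  {ω | ∀ i, T' i ω ∈ B i}

lemma cyl_measurable {Ω : Type*} [MeasurableSpace Ω] {n : ℕ} {T' : Fin n → Ω → ℝ}
    (hmeas : ∀ i, Measurable (T' i)) {B : Fin n → Set ℝ} (hB : ∀ i, MeasurableSet (B i)) :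
    MeasurableSet (cylEvent T' B) := by
  have : cylEvent T' B = ⋂ i, T' i ⁻¹' B i := by
    ext ω; simp [cylEvent, Set.mem_iInter, Set.mem_preimage]
  rw [this]
  exact MeasurableSet.iInter fun i => hmeas i (hB i)

lemma cyl_prob {Ω : Type*} [MeasurableSpace Ω] {μ : Measure Ω} {n : ℕ} {T' : Fin n → Ω → ℝ}
    (hindep : iIndepFun T' μ)
    {B : Fin n → Set ℝ} (hB : ∀ i, MeasurableSet (B i)) :
    μ (cylEvent T' B) = ∏ i, μ (T' i ⁻¹' B i) := by
  have : cylEvent T' B = ⋂ i, T' i ⁻¹' B i := by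
    ext ω; simp [cylEvent, Set.mem_iInter, Set.mem_preimage]
  rw [this]
  exact hindep.meas_iInter fun i => ⟨B i, hB i, rfl⟩

lemma cyl_disjoint {Ω : Type*} {n : ℕ} {T' : Fin n → Ω → ℝ} {B C : Fin n → Set ℝ}
    (i : Fin n) (h : Disjoint (B i) (C i)) :
    Disjoint (cylEvent T' B) (cylEvent T' C) := by
  rw [Set.disjoint_left]
  intro ω hB hC
  exact Set.disjoint_left.mp h (hB i) (hC i)

lemma event_partition {Ω : Type*} (k : ℕ) (T' : Fin (k+2) → Ω → ℝ) (u1 u2 u3 : ℝ)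
    (h12 : u1 ≤ u2) (h23 : u2 ≤ u3) :
    {ω | k ≤ (univ.filter fun i => T' i ω ≤ u1).card ∨
         k+1 ≤ (univ.filter fun i => T' i ω ≤ u2).card ∨
         k+2 ≤ (univ.filter fun i => T' i ω ≤ u3).card}
    = cylEvent T' (fun _ => Set.Iic u3)
      ∪ ((⋃ j, cylEvent T' (fun i => if i = j then Set.Ioi u3 else Set.Iic u2))
      ∪ ((⋃ p ∈ (univ : Finset (Fin (k+2))).offDiag, cylEvent T' (fun m => if m = p.1 then Set.Ioi u3 else if m = p.2 then Set.Ioc u2 u3 else Set.Iic u1))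
      ∪ (⋃ s ∈ Finset.powersetCard 2 (univ : Finset (Fin (k+2))), cylEvent T' (fun i => if i ∈ s then Set.Ioi u3 else Set.Iic u1)))) := by
  ext ω
  simp only [Set.mem_setOf_eq, Set.mem_union, Set.mem_iUnion, exists_prop, cylEvent]
  set F1 := univ.filter fun i => T' i ω ≤ u1 with hF1def
  set F2 := univ.filter fun i => T' i ω ≤ u2 with hF2def
  set F3 := univ.filter fun i => T' i ω ≤ u3 with hF3def
  have hsub12 : F1 ⊆ F2 := by
    intro i hi
    rw [hF1def, mem_filter] at hi
    rw [hF2def, mem_filter]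
    exact ⟨hi.1, hi.2.trans h12⟩
  have hsub23 : F2 ⊆ F3 := by
    intro i hi
    rw [hF2def, mem_filter] at hi
    rw [hF3def, mem_filter]
    exact ⟨hi.1, hi.2.trans h23⟩
  have hmemF1 : ∀ i, i ∈ F1 ↔ T' i ω ≤ u1 := by
    intro i; rw [hF1def, mem_filter]; simp
  have hmemF2 : ∀ i, i ∈ F2 ↔ T' i ω ≤ u2 := by
    intro i; rw [hF2def, mem_filter]; simp
  have hmemF3 : ∀ i, i ∈ F3 ↔ T' i ω ≤ u3 := by
    intro i; rw [hF3def, mem_filter]; simp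
  have hc3 : F3.card ≤ k + 2 := by
    calc F3.card ≤ (univ : Finset (Fin (k+2))).card := card_le_card (subset_univ _)
    _ = k + 2 := by simp
  constructor
  · intro hω
    have hk3 : k ≤ F3.card := by
      rcases hω with h | h | h
      · exact h.trans (card_le_card (hsub12.trans hsub23))
      · have := h.trans (card_le_card hsub23); omega
      · omega
    have hcases : F3.card = k+2 ∨ F3.card = k+1 ∨ F3.card = k := by omega
    rcases hcases with hc | hc | hc
    · -- all ≤ u3
      left
      intro i
      have hFu : F3 = univ := Finset.eq_univ_of_card F3 (by rw [hc]; simp)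
      have : i ∈ F3 := hFu ▸ mem_univ i
      exact (hmemF3 i).mp this
    · -- exactly one above u3
      have hcompl : (univ \ F3).card = 1 := by
        rw [Finset.card_sdiff_of_subset (subset_univ _), Finset.card_univ, Fintype.card_fin]; omega
      obtain ⟨j, hj⟩ := Finset.card_eq_one.mp hcompl
      have hjF3 : j ∉ F3 := by
        have : j ∈ univ \ F3 := hj ▸ Finset.mem_singleton_self j
        exact (Finset.mem_sdiff.mp this).2
      have hju3 : u3 < T' j ω := by
        by_contra h
        push_neg at h
        exact hjF3 ((hmemF3 j).mpr h)
      have hoth : ∀ i, i ≠ j → i ∈ F3 := by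
        intro i hij
        by_contra h
        have : i ∈ univ \ F3 := Finset.mem_sdiff.mpr ⟨mem_univ i, h⟩
        rw [hj] at this
        exact hij (Finset.mem_singleton.mp this)
      by_cases hN2 : k + 1 ≤ F2.card
      · -- B1 case
        have hjF2 : j ∉ F2 := fun h => hjF3 (hsub23 h)
        have hsub : F2 ⊆ univ.erase j := fun i hi =>
          Finset.mem_erase.mpr ⟨fun he => hjF2 (he ▸ hi), mem_univ i⟩
        have hF2eq : F2 = univ.erase j := Finset.eq_of_subset_of_card_le hsub
          (by rw [Finset.card_erase_of_mem (mem_univ j), Finset.card_univ, Fintype.card_fin]; omega)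
        right; left
        refine ⟨j, fun i => ?_⟩
        by_cases hij : i = j
        · rw [if_pos hij, Set.mem_Ioi]; exact hij ▸ hju3
        · rw [if_neg hij, Set.mem_Iic]
          have : i ∈ F2 := by
            rw [hF2eq]; exact Finset.mem_erase.mpr ⟨hij, mem_univ i⟩
          exact (hmemF2 i).mp this
      · -- B2 case
        have hk1 : k ≤ F1.card := by
          rcases hω with h | h | h
          · exact h
          · omega
          · omega
        have hc2 : F2.card ≤ k := by
          have := card_le_card hsub23; omega
        have hF1card : F1.card = k := le_antisymm (by have := card_le_card hsub12; omega) hk1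
        have hF12 : F1 = F2 := Finset.eq_of_subset_of_card_le hsub12 (by omega)
        have hjF1 : j ∉ F1 := fun h => hjF3 (hsub23 (hsub12 h))
        have hs0card : (insert j F1).card = k + 1 := by
          rw [Finset.card_insert_of_notMem hjF1, hF1card]
        have hcompl1 : (univ \ insert j F1).card = 1 := by
          rw [Finset.card_sdiff_of_subset (subset_univ _), Finset.card_univ, Fintype.card_fin]; omega
        obtain ⟨i, hi⟩ := Finset.card_eq_one.mp hcompl1
        have his0 : i ∉ insert j F1 := by
          have : i ∈ univ \ insert j F1 := hi ▸ Finset.mem_singleton_self i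
          exact (Finset.mem_sdiff.mp this).2
        have hij : i ≠ j := fun h => his0 (h ▸ Finset.mem_insert_self j F1)
        have hiF1 : i ∉ F1 := fun h => his0 (Finset.mem_insert_of_mem h)
        have hiu2 : u2 < T' i ω := by
          by_contra h
          push_neg at h
          exact hiF1 (hF12 ▸ (hmemF2 i).mpr h)
        have hiu3 : T' i ω ≤ u3 := (hmemF3 i).mp (hoth i hij)
        have hrest : ∀ m, m ≠ j → m ≠ i → T' m ω ≤ u1 := by
          intro m hmj hmi
          have hm : m ∈ insert j F1 := by
            by_contra h
            have : m ∈ univ \ insert j F1 := Finset.mem_sdiff.mpr ⟨mem_univ m, h⟩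
            rw [hi] at this
            exact hmi (Finset.mem_singleton.mp this)
          rcases Finset.mem_insert.mp hm with h | h
          · exact absurd h hmj
          · exact (hmemF1 m).mp h
        right; right; left
        refine ⟨(j, i), Finset.mem_offDiag.mpr ⟨mem_univ j, mem_univ i, fun h => hij h.symm⟩,
          fun m => ?_⟩
        by_cases hmj : m = j
        · rw [if_pos hmj, Set.mem_Ioi]; exact hmj ▸ hju3
        · rw [if_neg hmj]
          by_cases hmi : m = i
          · rw [if_pos hmi, Set.mem_Ioc]; exact ⟨hmi ▸ hiu2, hmi ▸ hiu3⟩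
          · rw [if_neg hmi, Set.mem_Iic]; exact hrest m hmj hmi
    · -- C case
      have hk1 : k ≤ F1.card := by
        rcases hω with h | h | h
        · exact h
        · have := card_le_card hsub23; omega
        · omega
      have hF13 : F1 = F3 := Finset.eq_of_subset_of_card_le (hsub12.trans hsub23) (by omega)
      right; right; right
      refine ⟨univ \ F3, ?_, fun i => ?_⟩
      · rw [Finset.mem_powersetCard]
        refine ⟨subset_univ _, ?_⟩
        rw [Finset.card_sdiff_of_subset (subset_univ _), Finset.card_univ, Fintype.card_fin]; omega
      · by_cases hmem : i ∈ univ \ F3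
        · rw [if_pos hmem, Set.mem_Ioi]
          have : i ∉ F3 := (Finset.mem_sdiff.mp hmem).2
          by_contra h
          push_neg at h
          exact this ((hmemF3 i).mpr h)
        · rw [if_neg hmem, Set.mem_Iic]
          have : i ∈ F3 := by
            by_contra h
            exact hmem (Finset.mem_sdiff.mpr ⟨mem_univ i, h⟩)
          exact (hmemF1 i).mp (hF13 ▸ this)
  · intro hω
    rcases hω with h | ⟨j, h⟩ | ⟨p, hp, h⟩ | ⟨s, hs, h⟩
    · right; right
      have : F3 = univ := Finset.eq_univ_iff_forall.mpr fun i => (hmemF3 i).mpr (h i)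
      rw [this, Finset.card_univ, Fintype.card_fin]
    · right; left
      have hsub : univ.erase j ⊆ F2 := by
        intro i hi
        have hij := Finset.ne_of_mem_erase hi
        have := h i
        rw [if_neg hij, Set.mem_Iic] at this
        exact (hmemF2 i).mpr this
      calc k + 1 = (univ.erase j).card := by
            rw [Finset.card_erase_of_mem (mem_univ j), Finset.card_univ, Fintype.card_fin]; omega
        _ ≤ F2.card := card_le_card hsub
    · left
      have hne := (Finset.mem_offDiag.mp hp).2.2
      have hsub : univ \ {p.1, p.2} ⊆ F1 := by
        intro m hm
        have h1 : m ∉ ({p.1, p.2} : Finset (Fin (k+2))) := (Finset.mem_sdiff.mp hm).2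
        have hm1 : m ≠ p.1 := fun he => h1 (by rw [he]; exact Finset.mem_insert_self _ _)
        have hm2 : m ≠ p.2 := fun he => h1 (by rw [he]; simp)
        have := h m
        rw [if_neg hm1, if_neg hm2, Set.mem_Iic] at this
        exact (hmemF1 m).mpr this
      calc k = (univ \ ({p.1, p.2} : Finset (Fin (k+2)))).card := by
            rw [Finset.card_sdiff_of_subset (subset_univ _), Finset.card_univ, Fintype.card_fin,
              Finset.card_pair hne]; omega
        _ ≤ F1.card := card_le_card hsub
    · left
      have hscard : s.card = 2 := (Finset.mem_powersetCard.mp hs).2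
      have hsub : univ \ s ⊆ F1 := by
        intro m hm
        have h1 : m ∉ s := (Finset.mem_sdiff.mp hm).2
        have := h m
        rw [if_neg h1, Set.mem_Iic] at this
        exact (hmemF1 m).mpr this
      calc k = (univ \ s).card := by
            rw [Finset.card_sdiff_of_subset (subset_univ _), Finset.card_univ, Fintype.card_fin, hscard]; omega
        _ ≤ F1.card := card_le_card hsub

theorem key {Ω : Type*} [MeasurableSpace Ω] (μ : Measure Ω) [IsProbabilityMeasure μ]
    (k : ℕ) (θ : ℝ) (hθ : 0 ≤ θ)
    (T' : Fin (k+2) → Ω → ℝ) (hmeas : ∀ i, Measurable (T' i))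
    (hindep : iIndepFun T' μ)
    (hccdf : ∀ i, ∀ t : ℝ, 0 ≤ t → μ {ω | t < T' i ω} = ENNReal.ofReal (Real.exp (-θ * t)))
    (u1 u2 u3 : ℝ) (h1 : 0 ≤ u1) (h12 : u1 ≤ u2) (h23 : u2 ≤ u3) :
    μ {ω | k ≤ (univ.filter fun i => T' i ω ≤ u1).card ∨
           k+1 ≤ (univ.filter fun i => T' i ω ≤ u2).card ∨
           k+2 ≤ (univ.filter fun i => T' i ω ≤ u3).card}
      = ENNReal.ofReal ((1 - Real.exp (-θ*u3))^(k+2)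
          + ((k+2 : ℕ) : ℝ) * (Real.exp (-θ*u3) * (1 - Real.exp (-θ*u2))^(k+1))
          + (((k+2)*(k+2)-(k+2) : ℕ) : ℝ) * (Real.exp (-θ*u3) * ((Real.exp (-θ*u2) - Real.exp (-θ*u3)) * (1 - Real.exp (-θ*u1))^k))
          + ((Nat.choose (k+2) 2 : ℕ) : ℝ) * (Real.exp (-θ*u3)^2 * (1 - Real.exp (-θ*u1))^k)) := by
  have h2 : 0 ≤ u2 := h1.trans h12
  have h3 : 0 ≤ u3 := h2.trans h23
  set e1 := Real.exp (-θ*u1) with he1def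
  set e2 := Real.exp (-θ*u2) with he2def
  set e3 := Real.exp (-θ*u3) with he3def
  have he1 : (0:ℝ) ≤ e1 := (Real.exp_pos _).le
  have he2 : (0:ℝ) ≤ e2 := (Real.exp_pos _).le
  have he3 : (0:ℝ) ≤ e3 := (Real.exp_pos _).le
  have hle1 : e1 ≤ 1 := by rw [he1def]; exact Real.exp_le_one_iff.mpr (by nlinarith)
  have hle2 : e2 ≤ 1 := by rw [he2def]; exact Real.exp_le_one_iff.mpr (by nlinarith)
  have hle3 : e3 ≤ 1 := by rw [he3def]; exact Real.exp_le_one_iff.mpr (by nlinarith)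
  have he23 : e3 ≤ e2 := by
    rw [he2def, he3def]; exact Real.exp_le_exp.mpr (by nlinarith)
  -- marginal distributions
  have hIoi : ∀ (i : Fin (k+2)) (u : ℝ), 0 ≤ u →
      μ (T' i ⁻¹' Set.Ioi u) = ENNReal.ofReal (Real.exp (-θ*u)) := by
    intro i u hu
    have : T' i ⁻¹' Set.Ioi u = {ω | u < T' i ω} := rfl
    rw [this, hccdf i u hu]
  have hIic : ∀ (i : Fin (k+2)) (u : ℝ), 0 ≤ u →
      μ (T' i ⁻¹' Set.Iic u) = ENNReal.ofReal (1 - Real.exp (-θ*u)) := by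
    intro i u hu
    have hcompl : T' i ⁻¹' Set.Iic u = (T' i ⁻¹' Set.Ioi u)ᶜ := by
      rw [← Set.preimage_compl, Set.compl_Ioi]
    rw [hcompl, prob_compl_eq_one_sub (hmeas i measurableSet_Ioi), hIoi i u hu,
      ENNReal.ofReal_sub 1 (Real.exp_pos _).le, ENNReal.ofReal_one]
  have hIoc : ∀ (i : Fin (k+2)) (u v : ℝ), 0 ≤ u → u ≤ v →
      μ (T' i ⁻¹' Set.Ioc u v) = ENNReal.ofReal (Real.exp (-θ*u) - Real.exp (-θ*v)) := by
    intro i u v hu huv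
    have hd : T' i ⁻¹' Set.Ioc u v = (T' i ⁻¹' Set.Ioi u) \ (T' i ⁻¹' Set.Ioi v) := by
      rw [← Set.preimage_diff, Set.Ioi_diff_Ioi]
    rw [hd, measure_diff (Set.preimage_mono (Set.Ioi_subset_Ioi huv))
      ((hmeas i measurableSet_Ioi).nullMeasurableSet)
      (by rw [hIoi i v (hu.trans huv)]; exact ENNReal.ofReal_ne_top),
      hIoi i u hu, hIoi i v (hu.trans huv), ENNReal.ofReal_sub _ (Real.exp_pos _).le]
  -- measurability of coordinate sets
  have hBA : ∀ i : Fin (k+2), MeasurableSet ((fun _ : Fin (k+2) => Set.Iic u3) i) :=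
    fun _ => measurableSet_Iic
  have hBB1 : ∀ j i : Fin (k+2), MeasurableSet (if i = j then Set.Ioi u3 else Set.Iic u2) := by
    intro j i; split_ifs; exacts [measurableSet_Ioi, measurableSet_Iic]
  have hBB2 : ∀ (p : Fin (k+2) × Fin (k+2)) (m : Fin (k+2)),
      MeasurableSet (if m = p.1 then Set.Ioi u3 else if m = p.2 then Set.Ioc u2 u3 else Set.Iic u1) := by
    intro p m; split_ifs; exacts [measurableSet_Ioi, measurableSet_Ioc, measurableSet_Iic]
  have hBC : ∀ (s : Finset (Fin (k+2))) (i : Fin (k+2)),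
      MeasurableSet (if i ∈ s then Set.Ioi u3 else Set.Iic u1) := by
    intro s i; split_ifs; exacts [measurableSet_Ioi, measurableSet_Iic]
  -- interval disjointness
  have dIic3Ioi3 : Disjoint (Set.Iic u3) (Set.Ioi u3) := by
    rw [Set.disjoint_left]; intro x hx hx'; simp only [Set.mem_Iic, Set.mem_Ioi] at *; linarith
  have dIic2Ioi3 : Disjoint (Set.Iic u2) (Set.Ioi u3) := by
    rw [Set.disjoint_left]; intro x hx hx'; simp only [Set.mem_Iic, Set.mem_Ioi] at *; linarith
  have dIic2Ioc : Disjoint (Set.Iic u2) (Set.Ioc u2 u3) := by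
    rw [Set.disjoint_left]; intro x hx hx'; simp only [Set.mem_Iic, Set.mem_Ioc] at *
    rcases hx' with ⟨h, _⟩; linarith
  have dIocIoi3 : Disjoint (Set.Ioc u2 u3) (Set.Ioi u3) := by
    rw [Set.disjoint_left]; intro x hx hx'; simp only [Set.mem_Ioc, Set.mem_Ioi] at *
    rcases hx with ⟨_, h⟩; linarith
  have dIic1Ioi3 : Disjoint (Set.Iic u1) (Set.Ioi u3) := by
    rw [Set.disjoint_left]; intro x hx hx'; simp only [Set.mem_Iic, Set.mem_Ioi] at *; linarith
  have dIic1Ioc : Disjoint (Set.Iic u1) (Set.Ioc u2 u3) := by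
    rw [Set.disjoint_left]; intro x hx hx'; simp only [Set.mem_Iic, Set.mem_Ioc] at *
    rcases hx' with ⟨h, _⟩; linarith
  -- picking elements
  have hpick : ∀ (s : Finset (Fin (k+2))), s.card = 2 → ∀ j : Fin (k+2), ∃ i ∈ s, i ≠ j := by
    intro s hs j
    by_contra h
    push_neg at h
    have hsub : s ⊆ {j} := fun x hx => Finset.mem_singleton.mpr (h x hx)
    have := Finset.card_le_card hsub
    simp [hs] at this
  have hpick2 : ∀ (s s' : Finset (Fin (k+2))), s.card = 2 → s'.card = 2 → s ≠ s' →
      ∃ i ∈ s, i ∉ s' := by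
    intro s s' hs hs' hne
    by_contra h
    push_neg at h
    exact hne (Finset.eq_of_subset_of_card_le h (by omega))
  rw [event_partition k T' u1 u2 u3 h12 h23]
  set A := cylEvent T' (fun _ => Set.Iic u3) with hAdef
  set B1 := fun j : Fin (k+2) =>
    cylEvent T' (fun i => if i = j then Set.Ioi u3 else Set.Iic u2) with hB1def
  set B2 := fun p : Fin (k+2) × Fin (k+2) => cylEvent T'
    (fun m => if m = p.1 then Set.Ioi u3 else if m = p.2 then Set.Ioc u2 u3 else Set.Iic u1) with hB2def
  set C := fun s : Finset (Fin (k+2)) => cylEvent T'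
    (fun i => if i ∈ s then Set.Ioi u3 else Set.Iic u1) with hCdef
  have hmB1 : ∀ j, MeasurableSet (B1 j) := fun j => cyl_measurable hmeas (hBB1 j)
  have hmB2 : ∀ p, MeasurableSet (B2 p) := fun p => cyl_measurable hmeas (hBB2 p)
  have hmC : ∀ s, MeasurableSet (C s) := fun s => cyl_measurable hmeas (hBC s)
  -- disjointness of the pieces
  have D3 : Disjoint (⋃ p ∈ (univ : Finset (Fin (k+2))).offDiag, B2 p)
      (⋃ s ∈ Finset.powersetCard 2 (univ : Finset (Fin (k+2))), C s) := by
    refine Set.disjoint_iUnion_left.mpr fun p => Set.disjoint_iUnion_left.mpr fun hp => ?_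
    refine Set.disjoint_iUnion_right.mpr fun s => Set.disjoint_iUnion_right.mpr fun hs => ?_
    have hscard : s.card = 2 := (Finset.mem_powersetCard.mp hs).2
    obtain ⟨i, his, hip1⟩ := hpick s hscard p.1
    refine cyl_disjoint i ?_
    rw [if_neg hip1, if_pos his]
    split_ifs
    · exact dIocIoi3
    · exact dIic1Ioi3
  have D2 : Disjoint (⋃ j, B1 j)
      ((⋃ p ∈ (univ : Finset (Fin (k+2))).offDiag, B2 p)
        ∪ (⋃ s ∈ Finset.powersetCard 2 (univ : Finset (Fin (k+2))), C s)) := by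
    refine Set.disjoint_union_right.mpr ⟨?_, ?_⟩
    · refine Set.disjoint_iUnion_left.mpr fun j => ?_
      refine Set.disjoint_iUnion_right.mpr fun p => Set.disjoint_iUnion_right.mpr fun hp => ?_
      have hne : p.1 ≠ p.2 := (Finset.mem_offDiag.mp hp).2.2
      by_cases hj : p.1 = j
      · refine cyl_disjoint p.2 ?_
        have h21 : p.2 ≠ j := by rw [← hj]; exact Ne.symm hne
        rw [if_neg h21, if_neg (show p.2 ≠ p.1 from Ne.symm hne), if_pos rfl]
        exact dIic2Ioc
      · refine cyl_disjoint p.1 ?_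
        rw [if_neg hj, if_pos rfl]
        exact dIic2Ioi3
    · refine Set.disjoint_iUnion_left.mpr fun j => ?_
      refine Set.disjoint_iUnion_right.mpr fun s => Set.disjoint_iUnion_right.mpr fun hs => ?_
      have hscard : s.card = 2 := (Finset.mem_powersetCard.mp hs).2
      obtain ⟨i, his, hij⟩ := hpick s hscard j
      refine cyl_disjoint i ?_
      rw [if_neg hij, if_pos his]
      exact dIic2Ioi3
  have D1 : Disjoint A ((⋃ j, B1 j)
      ∪ ((⋃ p ∈ (univ : Finset (Fin (k+2))).offDiag, B2 p)
        ∪ (⋃ s ∈ Finset.powersetCard 2 (univ : Finset (Fin (k+2))), C s))) := by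
    refine Set.disjoint_union_right.mpr ⟨?_, Set.disjoint_union_right.mpr ⟨?_, ?_⟩⟩
    · refine Set.disjoint_iUnion_right.mpr fun j => ?_
      refine cyl_disjoint j ?_
      rw [if_pos rfl]
      exact dIic3Ioi3
    · refine Set.disjoint_iUnion_right.mpr fun p => Set.disjoint_iUnion_right.mpr fun hp => ?_
      refine cyl_disjoint p.1 ?_
      rw [if_pos rfl]
      exact dIic3Ioi3
    · refine Set.disjoint_iUnion_right.mpr fun s => Set.disjoint_iUnion_right.mpr fun hs => ?_
      have hscard : s.card = 2 := (Finset.mem_powersetCard.mp hs).2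
      obtain ⟨i, his⟩ := Finset.card_pos.mp (by omega : 0 < s.card)
      refine cyl_disjoint i ?_
      rw [if_pos his]
      exact dIic3Ioi3
  have PW1 : Pairwise (Function.onFun Disjoint B1) := by
    intro j j' hjj'
    refine cyl_disjoint j ?_
    rw [if_pos rfl, if_neg hjj']
    exact dIic2Ioi3.symm
  have PW2 : Set.PairwiseDisjoint (↑((univ : Finset (Fin (k+2))).offDiag)) B2 := by
    intro p hp q hq hpq
    simp only [Finset.coe_sort_coe, Finset.mem_coe] at hp hq
    have hp' : p.1 ≠ p.2 := (Finset.mem_offDiag.mp hp).2.2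
    have hq' : q.1 ≠ q.2 := (Finset.mem_offDiag.mp hq).2.2
    by_cases h : p.1 = q.1
    · have h2 : p.2 ≠ q.2 := fun he => hpq (Prod.ext h he)
      refine cyl_disjoint q.2 ?_
      have hq2p1 : q.2 ≠ p.1 := by rw [h]; exact Ne.symm hq'
      rw [if_neg hq2p1, if_neg (Ne.symm h2), if_neg (Ne.symm hq'), if_pos rfl]
      exact dIic1Ioc
    · refine cyl_disjoint q.1 ?_
      rw [if_neg (fun he : q.1 = p.1 => h he.symm)]
      rw [if_pos rfl]
      split_ifs
      · exact dIocIoi3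
      · exact dIic1Ioi3
  have PW3 : Set.PairwiseDisjoint (↑(Finset.powersetCard 2 (univ : Finset (Fin (k+2))))) C := by
    intro s hs s' hs' hne
    simp only [Finset.mem_coe] at hs hs'
    have h1 : s.card = 2 := (Finset.mem_powersetCard.mp hs).2
    have h2 : s'.card = 2 := (Finset.mem_powersetCard.mp hs').2
    obtain ⟨i, his, his'⟩ := hpick2 s s' h1 h2 hne
    refine cyl_disjoint i ?_
    rw [if_pos his, if_neg his']
    exact dIic1Ioi3.symm
  -- measures of the pieces
  have hAv : μ A = ENNReal.ofReal ((1 - e3)^(k+2)) := by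
    rw [hAdef, cyl_prob hindep hBA,
      Finset.prod_congr rfl (fun i _ => hIic i u3 h3),
      Finset.prod_const, Finset.card_univ, Fintype.card_fin,
      ← ENNReal.ofReal_pow (by linarith)]
  have hB1v : ∀ j, μ (B1 j) = ENNReal.ofReal (e3 * (1 - e2)^(k+1)) := by
    intro j
    rw [hB1def]
    rw [cyl_prob hindep (hBB1 j)]
    have hstep : ∀ i ∈ (univ : Finset (Fin (k+2))),
        μ (T' i ⁻¹' (if i = j then Set.Ioi u3 else Set.Iic u2))
          = if i = j then ENNReal.ofReal e3 else ENNReal.ofReal (1 - e2) := by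
      intro i _
      by_cases h : i = j
      · rw [if_pos h, if_pos h, hIoi i u3 h3]
      · rw [if_neg h, if_neg h, hIic i u2 h2]
    rw [Finset.prod_congr rfl hstep, prod_ite_one' j _ _, Fintype.card_fin,
      show k+2-1 = k+1 from by omega,
      ← ENNReal.ofReal_pow (by linarith), ← ENNReal.ofReal_mul he3]
  have hB2v : ∀ p ∈ (univ : Finset (Fin (k+2))).offDiag,
      μ (B2 p) = ENNReal.ofReal (e3 * ((e2 - e3) * (1 - e1)^k)) := by
    intro p hp
    have hne : p.1 ≠ p.2 := (Finset.mem_offDiag.mp hp).2.2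
    rw [hB2def]
    rw [cyl_prob hindep (hBB2 p)]
    have hstep : ∀ m ∈ (univ : Finset (Fin (k+2))),
        μ (T' m ⁻¹' (if m = p.1 then Set.Ioi u3 else if m = p.2 then Set.Ioc u2 u3 else Set.Iic u1))
          = if m = p.1 then ENNReal.ofReal e3 else if m = p.2 then ENNReal.ofReal (e2 - e3)
            else ENNReal.ofReal (1 - e1) := by
      intro m _
      by_cases hm1 : m = p.1
      · rw [if_pos hm1, if_pos hm1, hIoi m u3 h3]
      · rw [if_neg hm1, if_neg hm1]
        by_cases hm2 : m = p.2
        · rw [if_pos hm2, if_pos hm2, hIoc m u2 u3 h2 h23]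
        · rw [if_neg hm2, if_neg hm2, hIic m u1 h1]
    rw [Finset.prod_congr rfl hstep, prod_ite_two' p.1 p.2 (Ne.symm hne) _ _ _, Fintype.card_fin,
      show k+2-2 = k from by omega,
      ← ENNReal.ofReal_pow (by linarith), ← ENNReal.ofReal_mul (by linarith),
      ← ENNReal.ofReal_mul he3]
  have hCv : ∀ s ∈ Finset.powersetCard 2 (univ : Finset (Fin (k+2))),
      μ (C s) = ENNReal.ofReal (e3^2 * (1 - e1)^k) := by
    intro s hs
    have hscard : s.card = 2 := (Finset.mem_powersetCard.mp hs).2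
    rw [hCdef]
    rw [cyl_prob hindep (hBC s)]
    have hstep : ∀ i ∈ (univ : Finset (Fin (k+2))),
        μ (T' i ⁻¹' (if i ∈ s then Set.Ioi u3 else Set.Iic u1))
          = if i ∈ s then ENNReal.ofReal e3 else ENNReal.ofReal (1 - e1) := by
      intro i _
      by_cases h : i ∈ s
      · rw [if_pos h, if_pos h, hIoi i u3 h3]
      · rw [if_neg h, if_neg h, hIic i u1 h1]
    rw [Finset.prod_congr rfl hstep, prod_ite_mem' s _ _, Fintype.card_fin, hscard,
      show k+2-2 = k from by omega,
      ← ENNReal.ofReal_pow he3, ← ENNReal.ofReal_pow (by linarith : (0:ℝ) ≤ 1 - e1),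
      ← ENNReal.ofReal_mul (pow_nonneg he3 _)]
  -- assemble
  rw [measure_union D1 (((MeasurableSet.iUnion hmB1)).union
    (((MeasurableSet.iUnion fun p => MeasurableSet.iUnion fun _ => hmB2 p)).union
      (MeasurableSet.iUnion fun s => MeasurableSet.iUnion fun _ => hmC s)))]
  rw [measure_union D2 (((MeasurableSet.iUnion fun p => MeasurableSet.iUnion fun _ => hmB2 p)).union
      (MeasurableSet.iUnion fun s => MeasurableSet.iUnion fun _ => hmC s))]
  rw [measure_union D3 (MeasurableSet.iUnion fun s => MeasurableSet.iUnion fun _ => hmC s)]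
  rw [measure_iUnion PW1 hmB1, tsum_fintype]
  rw [measure_biUnion_finset PW2 (fun p _ => hmB2 p)]
  rw [measure_biUnion_finset PW3 (fun s _ => hmC s)]
  rw [hAv, Finset.sum_congr rfl (fun j _ => hB1v j),
    Finset.sum_congr rfl hB2v, Finset.sum_congr rfl hCv,
    Finset.sum_const, Finset.sum_const, Finset.sum_const,
    Finset.card_univ, Fintype.card_fin, Finset.offDiag_card,
    Finset.card_univ, Fintype.card_fin, Finset.card_powersetCard,
    Finset.card_univ, Fintype.card_fin]
  rw [nsmul_eq_mul, nsmul_eq_mul, nsmul_eq_mul]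
  rw [← ENNReal.ofReal_natCast (k+2), ← ENNReal.ofReal_natCast ((k+2)*(k+2)-(k+2)),
    ← ENNReal.ofReal_natCast ((k+2).choose 2)]
  have hX1 : (0:ℝ) ≤ e3 * (1 - e2)^(k+1) := mul_nonneg he3 (pow_nonneg (by linarith) _)
  have hX2 : (0:ℝ) ≤ e3 * ((e2 - e3) * (1 - e1)^k) :=
    mul_nonneg he3 (mul_nonneg (by linarith) (pow_nonneg (by linarith) _))
  have hX3 : (0:ℝ) ≤ e3^2 * (1 - e1)^k :=
    mul_nonneg (pow_nonneg he3 _) (pow_nonneg (by linarith) _)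
  rw [← ENNReal.ofReal_mul (Nat.cast_nonneg _), ← ENNReal.ofReal_mul (Nat.cast_nonneg _),
    ← ENNReal.ofReal_mul (Nat.cast_nonneg _)]
  have hY1 : (0:ℝ) ≤ ((k+2:ℕ):ℝ) * (e3 * (1 - e2)^(k+1)) := mul_nonneg (Nat.cast_nonneg _) hX1
  have hY2 : (0:ℝ) ≤ (((k+2)*(k+2)-(k+2):ℕ):ℝ) * (e3 * ((e2 - e3) * (1 - e1)^k)) :=
    mul_nonneg (Nat.cast_nonneg _) hX2
  have hY3 : (0:ℝ) ≤ (((k+2).choose 2:ℕ):ℝ) * (e3^2 * (1 - e1)^k) :=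
    mul_nonneg (Nat.cast_nonneg _) hX3
  rw [← ENNReal.ofReal_add hY2 hY3, ← ENNReal.ofReal_add hY1 (add_nonneg hY2 hY3),
    ← ENNReal.ofReal_add (pow_nonneg (by linarith : (0:ℝ) ≤ 1 - e3) _)
      (add_nonneg hY1 (add_nonneg hY2 hY3))]
  congr 1
  ring

/-- exact CDF of the Master's waiting time for a `(k+2,k,z)` system
(up to two stragglers) using Staircase codes. -/
theorem staircase_waiting_time_cdf_two_stragglers
    {Ω : Type*} [MeasurableSpace Ω] (μ : Measure Ω) [IsProbabilityMeasure μ]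
    (k z : ℕ) (hzk : z < k)
    (lam c : ℝ) (hlam : 0 < lam) (hc : 0 ≤ c)
    (T' : Fin (k + 2) → Ω → ℝ)
    (hmeas : ∀ i, Measurable (T' i))
    (hindep : iIndepFun T' μ)
    (hnonneg : ∀ i ω, 0 ≤ T' i ω)
    (hccdf : ∀ i, ∀ t : ℝ, 0 ≤ t →
      μ {ω | t < T' i ω} = ENNReal.ofReal (Real.exp (-(lam * ((k : ℝ) - z)) * t))) :
    ∀ t : ℝ, 0 < t →
      (μ {ω | TSC (k + 2) k z (by omega) c (fun i => T' i ω) ≤ t}).toReal =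
        Fcdf (lam * ((k : ℝ) - z)) (tThr k z c t ((k : ℝ) + 2)) ^ (k + 2)
          + ((k : ℝ) + 2) * (1 - Fcdf (lam * ((k : ℝ) - z)) (tThr k z c t ((k : ℝ) + 2))) *
            (Fcdf (lam * ((k : ℝ) - z)) (tThr k z c t ((k : ℝ) + 1)) ^ (k + 1)
              + ((k : ℝ) + 1) * Fcdf (lam * ((k : ℝ) - z)) (tThr k z c t (k : ℝ)) ^ k *
                ((1 - Fcdf (lam * ((k : ℝ) - z)) (tThr k z c t ((k : ℝ) + 1)))
                  - (1 / 2) * (1 - Fcdf (lam * ((k : ℝ) - z)) (tThr k z c t ((k : ℝ) + 2))))) := by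
  intro t ht
  set θ := lam * ((k : ℝ) - z) with hθdef
  have hzkR : (z:ℝ) < (k:ℝ) := by exact_mod_cast hzk
  have hkz : (0:ℝ) < (k:ℝ) - (z:ℝ) := by linarith
  have hθpos : 0 < θ := mul_pos hlam hkz
  set sd : ℝ → ℝ := fun d => (t * (d - (z:ℝ)) - c) / ((k:ℝ) - (z:ℝ)) with hsddef
  have hthr : ∀ d : ℝ, (k:ℝ) ≤ d → tThr k z c t d = max (sd d) 0 := by
    intro d hd
    have hdz' : (0:ℝ) < d - z := by linarith
    unfold tThr
    congr 1
    rw [hsddef]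
    field_simp
  have hmono : ∀ d d' : ℝ, d ≤ d' → sd d ≤ sd d' := by
    intro d d' h
    rw [hsddef]
    rw [div_le_div_iff₀ hkz hkz]
    have hnum : t * (d - (z:ℝ)) - c ≤ t * (d' - (z:ℝ)) - c := by
      nlinarith [mul_le_mul_of_nonneg_left h ht.le]
    exact mul_le_mul_of_nonneg_right hnum hkz.le
  set u1 := tThr k z c t (k:ℝ) with hu1def
  set u2 := tThr k z c t ((k:ℝ)+1) with hu2def
  set u3 := tThr k z c t ((k:ℝ)+2) with hu3def
  have h1 : (0:ℝ) ≤ u1 := by rw [hu1def]; unfold tThr; exact le_max_right _ _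
  have h12 : u1 ≤ u2 := by
    rw [hu1def, hu2def, hthr _ le_rfl, hthr _ (by linarith)]
    exact max_le_max (hmono _ _ (by linarith)) le_rfl
  have h23 : u2 ≤ u3 := by
    rw [hu2def, hu3def, hthr _ (by linarith), hthr _ (by linarith)]
    exact max_le_max (hmono _ _ (by linarith)) le_rfl
  have h2 : (0:ℝ) ≤ u2 := h1.trans h12
  have h3 : (0:ℝ) ≤ u3 := h2.trans h23
  -- event characterization
  have hone : ∀ ω, ∀ d : ℕ, k ≤ d → d ≤ k+2 →
      (((k:ℝ) - z) / ((d:ℝ) - z) * orderStat (fun i => c / ((k:ℝ) - z) + T' i ω) d ≤ t ↔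
        d ≤ (univ.filter fun i => T' i ω ≤ sd (d:ℝ)).card) := by
    intro ω d hkd hd2
    have hdzpos : (0:ℝ) < (d:ℝ) - z := by
      have : (k:ℝ) ≤ (d:ℝ) := by exact_mod_cast hkd
      linarith
    have hα : (0:ℝ) < ((k:ℝ) - z) / ((d:ℝ) - z) := div_pos hkz hdzpos
    rw [mul_comm, ← le_div_iff₀ hα, div_div_eq_mul_div,
      orderStat_le_iff _ d (by omega) (by omega)]
    have hsdv : sd (d:ℝ) = t * ((d:ℝ) - z) / ((k:ℝ) - z) - c / ((k:ℝ) - z) := by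
      rw [hsddef]
      exact sub_div _ _ _
    have hfeq : (univ.filter fun i =>
          (fun i => c / ((k:ℝ) - z) + T' i ω) i ≤ t * ((d:ℝ) - z) / ((k:ℝ) - z))
        = (univ.filter fun i => T' i ω ≤ sd (d:ℝ)) := by
      apply Finset.filter_congr
      intro i _
      show c / ((k:ℝ) - z) + T' i ω ≤ t * ((d:ℝ) - z) / ((k:ℝ) - z) ↔ T' i ω ≤ sd (d:ℝ)
      rw [hsdv, le_sub_iff_add_le, add_comm]
    rw [hfeq]
  have hev : {ω | TSC (k + 2) k z (by omega) c (fun i => T' i ω) ≤ t} =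
      {ω | k ≤ (univ.filter fun i => T' i ω ≤ sd (k:ℝ)).card ∨
           k+1 ≤ (univ.filter fun i => T' i ω ≤ sd ((k:ℝ)+1)).card ∨
           k+2 ≤ (univ.filter fun i => T' i ω ≤ sd ((k:ℝ)+2)).card} := by
    ext ω
    simp only [Set.mem_setOf_eq, TSC]
    rw [Finset.inf'_le_iff]
    have hc2 : (((k+1:ℕ)):ℝ) = (k:ℝ)+1 := by push_cast; ring
    have hc3 : (((k+2:ℕ)):ℝ) = (k:ℝ)+2 := by push_cast; ring
    constructor
    · rintro ⟨d, hd, hle⟩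
      rw [Finset.mem_Icc] at hd
      have hthis := (hone ω d hd.1 hd.2).mp hle
      have hd3 : d = k ∨ d = k+1 ∨ d = k+2 := by omega
      rcases hd3 with rfl | rfl | rfl
      · left; exact hthis
      · right; left; rw [hc2] at hthis; exact hthis
      · right; right; rw [hc3] at hthis; exact hthis
    · rintro (h | h | h)
      · exact ⟨k, Finset.mem_Icc.mpr ⟨le_rfl, by omega⟩, (hone ω k le_rfl (by omega)).mpr h⟩
      · refine ⟨k+1, Finset.mem_Icc.mpr ⟨by omega, by omega⟩,
          (hone ω (k+1) (by omega) (by omega)).mpr ?_⟩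
        rw [hc2]; exact h
      · refine ⟨k+2, Finset.mem_Icc.mpr ⟨by omega, by omega⟩,
          (hone ω (k+2) (by omega) (by omega)).mpr ?_⟩
        rw [hc3]; exact h
  rw [hev]
  -- a.e. replacement of thresholds
  have hGnull : μ {ω | ¬ ∀ i, 0 < T' i ω} = 0 := by
    have hU : {ω | ¬ ∀ i, 0 < T' i ω} = ⋃ i, {ω | T' i ω ≤ 0} := by
      ext ω; simp [not_lt]
    rw [hU]
    refine measure_iUnion_null fun i => ?_
    have hcompl : {ω | T' i ω ≤ 0} = {ω | (0:ℝ) < T' i ω}ᶜ := by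
      ext ω; simp [not_lt]
    have hms : MeasurableSet {ω | (0:ℝ) < T' i ω} := hmeas i measurableSet_Ioi
    rw [hcompl, prob_compl_eq_one_sub hms, hccdf i 0 le_rfl]
    norm_num
  have hGood : ∀ᵐ ω ∂μ, ∀ i, 0 < T' i ω := by
    rw [ae_iff]; exact hGnull
  have hae : {ω | k ≤ (univ.filter fun i => T' i ω ≤ sd (k:ℝ)).card ∨
           k+1 ≤ (univ.filter fun i => T' i ω ≤ sd ((k:ℝ)+1)).card ∨
           k+2 ≤ (univ.filter fun i => T' i ω ≤ sd ((k:ℝ)+2)).card}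
      =ᵐ[μ] {ω | k ≤ (univ.filter fun i => T' i ω ≤ u1).card ∨
           k+1 ≤ (univ.filter fun i => T' i ω ≤ u2).card ∨
           k+2 ≤ (univ.filter fun i => T' i ω ≤ u3).card} := by
    rw [Filter.eventuallyEq_set]
    filter_upwards [hGood] with ω hω
    have hfeq : ∀ d : ℝ, (k:ℝ) ≤ d →
        (univ.filter fun i => T' i ω ≤ sd d)
          = (univ.filter fun i => T' i ω ≤ tThr k z c t d) := by
      intro d hd
      rw [hthr d hd]
      apply Finset.filter_congr
      intro i _
      rcases le_or_gt 0 (sd d) with hs | hs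
      · rw [max_eq_left hs]
      · rw [max_eq_right hs.le]
        constructor
        · intro hle; exfalso; linarith [hω i]
        · intro hle; exfalso; linarith [hω i]
    rw [hfeq (k:ℝ) le_rfl, hfeq ((k:ℝ)+1) (by linarith), hfeq ((k:ℝ)+2) (by linarith)]
  rw [measure_congr hae]
  rw [key μ k θ hθpos.le T' hmeas hindep hccdf u1 u2 u3 h1 h12 h23]
  -- real computation
  have hE1 : Real.exp (-θ * u1) ≤ 1 := Real.exp_le_one_iff.mpr (by nlinarith)
  have hE2 : Real.exp (-θ * u2) ≤ 1 := Real.exp_le_one_iff.mpr (by nlinarith)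
  have hE3 : Real.exp (-θ * u3) ≤ 1 := Real.exp_le_one_iff.mpr (by nlinarith)
  have hE23 : Real.exp (-θ * u3) ≤ Real.exp (-θ * u2) := Real.exp_le_exp.mpr (by nlinarith)
  have hP1 : (0:ℝ) ≤ 1 - Real.exp (-θ * u1) := by linarith
  have hP2 : (0:ℝ) ≤ 1 - Real.exp (-θ * u2) := by linarith
  have hP3 : (0:ℝ) ≤ 1 - Real.exp (-θ * u3) := by linarith
  have hQ : (0:ℝ) ≤ Real.exp (-θ * u2) - Real.exp (-θ * u3) := by linarith
  rw [ENNReal.toReal_ofReal (by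
    have := Real.exp_pos (-θ * u3)
    have := Real.exp_pos (-θ * u2)
    refine add_nonneg (add_nonneg (add_nonneg (pow_nonneg hP3 _) ?_) ?_) ?_
    · exact mul_nonneg (Nat.cast_nonneg _)
        (mul_nonneg (Real.exp_pos _).le (pow_nonneg hP2 _))
    · exact mul_nonneg (Nat.cast_nonneg _)
        (mul_nonneg (Real.exp_pos _).le (mul_nonneg hQ (pow_nonneg hP1 _)))
    · exact mul_nonneg (Nat.cast_nonneg _)
        (mul_nonneg (pow_nonneg (Real.exp_pos _).le _) (pow_nonneg hP1 _)))]
  have hnat : ((k+2)*(k+2)-(k+2) : ℕ) = (k+2)*(k+1) := by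
    have h : (k+2)*(k+2) = (k+2)*(k+1)+(k+2) := by ring
    omega
  rw [hnat, Nat.cast_choose_two]
  simp only [Fcdf, if_pos h1, if_pos h2, if_pos h3]
  push_cast
  ring
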